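/- If 0 < x_1 < ... < x_{n+1} < 1, the diagonal pivots of the Neville elimination of the Bernstein–Vandermonde matrix A are p_{i,i} = C(n,i-1)·(1-x_i)^{n-i+1}·Π_{k<i}(x_i - x_k) / Π_{k=1}^{i-1}(1-x_k), for i = 1, ..., n+1; equivalently, p_{i,i} = det A[1..i | 1..i] / det A[1..i-1 | 1..i-1], the ratio of consecutive leading principal minors. -/

import Mathlib

open Finset

lemma pair_prod (m : ℕ) (g : ℕ → ℕ → ℝ) :
    (∏ r : Fin m, ∏ s ∈ Finset.Ioi r, g ↑r ↑s) =
      ∏ r ∈ Finset.range m, ∏ s ∈ Finset.Ioc r (m-1), g r s := by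
  rw [← Fin.prod_univ_eq_prod_range (fun r => ∏ s ∈ Finset.Ioc r (m-1), g r s) m]
  refine Fintype.prod_congr _ _ fun r => ?_
  rw [show Finset.Ioc (r : ℕ) (m-1) = Finset.Ioo (r : ℕ) m by have := r.isLt; ext a; simp; omega,
    ← Fin.map_valEmbedding_Ioi, Finset.prod_map]
  rfl

lemma detM (n m : ℕ) (hm : m ≤ n + 1) (y : ℕ → ℝ) (hy : ∀ r, r < m → y r ≠ 1) :
    (Matrix.of fun r c : Fin m =>
        (n.choose c : ℝ) * (1 - y (r : ℕ)) ^ (n - (c : ℕ)) * y (r : ℕ) ^ (c : ℕ)).det =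
      (∏ c ∈ Finset.range m, (n.choose c : ℝ)) * (∏ r ∈ Finset.range m, (1 - y r) ^ n) *
        ∏ r ∈ Finset.range m, ∏ s ∈ Finset.Ioc r (m - 1),
          (y s / (1 - y s) - y r / (1 - y r)) := by
  have key : (Matrix.of fun r c : Fin m =>
        (n.choose c : ℝ) * (1 - y (r : ℕ)) ^ (n - (c : ℕ)) * y (r : ℕ) ^ (c : ℕ)) =
      (Matrix.diagonal fun r : Fin m => (1 - y (r : ℕ)) ^ n) *
        (Matrix.vandermonde fun r : Fin m => y (r : ℕ) / (1 - y (r : ℕ))) *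
        (Matrix.diagonal fun c : Fin m => (n.choose (c : ℕ) : ℝ)) := by
    ext r c
    rw [Matrix.mul_diagonal, Matrix.diagonal_mul, Matrix.vandermonde]
    have h1 : (1 - y (r : ℕ)) ≠ 0 := sub_ne_zero.mpr (Ne.symm (hy r r.isLt))
    have hcn : (c : ℕ) ≤ n := by omega
    have : (1 - y (r : ℕ)) ^ n = (1 - y (r : ℕ)) ^ (n - (c : ℕ)) * (1 - y (r : ℕ)) ^ (c : ℕ) := by
      rw [← pow_add, Nat.sub_add_cancel hcn]
    simp only [Matrix.of_apply, this]
    field_simp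
    rw [div_pow, mul_assoc, mul_div_assoc', mul_div_cancel_left₀ _ (pow_ne_zero _ h1)]
  rw [key, Matrix.det_mul, Matrix.det_mul, Matrix.det_diagonal, Matrix.det_diagonal,
    Matrix.det_vandermonde, pair_prod m (fun r s => y s / (1 - y s) - y r / (1 - y r)),
    Fin.prod_univ_eq_prod_range (fun r => (1 - y r) ^ n) m,
    Fin.prod_univ_eq_prod_range (fun c => (n.choose c : ℝ)) m]
  ring

/-- The diagonal pivots of the Neville elimination of the Bernstein–Vandermonde matrix:
the ratio of consecutive leading principal minors equals the closed formula. -/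
theorem bernstein_vandermonde_diagonal_pivots (n : ℕ) (x : ℕ → ℝ)
    (hx : ∀ k, 1 ≤ k → k ≤ n + 1 → 0 < x k ∧ x k < 1)
    (hmono : ∀ k l, 1 ≤ k → k < l → l ≤ n + 1 → x k < x l)
    (i : ℕ) (hi1 : 1 ≤ i) (hi2 : i ≤ n + 1) :
    (Matrix.of fun r c : Fin i =>
        (n.choose c : ℝ) * (1 - x ((r : ℕ) + 1)) ^ (n - (c : ℕ)) * x ((r : ℕ) + 1) ^ (c : ℕ)).det /
      (Matrix.of fun r c : Fin (i - 1) =>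
        (n.choose c : ℝ) * (1 - x ((r : ℕ) + 1)) ^ (n - (c : ℕ)) * x ((r : ℕ) + 1) ^ (c : ℕ)).det =
      (n.choose (i - 1) : ℝ) * (1 - x i) ^ (n + 1 - i) *
        (∏ k ∈ Finset.Ico 1 i, (x i - x k)) / ∏ k ∈ Finset.Icc 1 (i - 1), (1 - x k) := by
  obtain ⟨j, rfl⟩ : ∃ j, i = j + 1 := ⟨i - 1, by omega⟩
  set y : ℕ → ℝ := fun r => x (r + 1) with hy
  have hylt : ∀ r, r < n + 1 → 0 < y r ∧ y r < 1 := fun r hr => hx (r + 1) (by omega) (by omega)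
  have hjn : j ≤ n := by omega
  have hy1 : ∀ r, r < j + 1 → y r ≠ 1 := fun r hr => ne_of_lt (hylt r (by omega)).2
  have hy1' : ∀ r, r < j → y r ≠ 1 := fun r hr => hy1 r (by omega)
  have hN := detM n (j + 1) (by omega) y hy1
  have hD := detM n j (by omega) y hy1'
  show (Matrix.of fun r c : Fin (j+1) =>
        (n.choose c : ℝ) * (1 - y (r : ℕ)) ^ (n - (c : ℕ)) * y (r : ℕ) ^ (c : ℕ)).det /
      (Matrix.of fun r c : Fin j =>
        (n.choose c : ℝ) * (1 - y (r : ℕ)) ^ (n - (c : ℕ)) * y (r : ℕ) ^ (c : ℕ)).det = _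
  rw [hN, hD]
  -- clean up index arithmetic
  have hxj : 0 < x (j + 1) ∧ x (j + 1) < 1 := hx (j + 1) (by omega) (by omega)
  have h1j : (1 : ℝ) - x (j + 1) ≠ 0 := by linarith [hxj.2]
  have h1r : ∀ r, r < n + 1 → (1 : ℝ) - y r ≠ 0 := fun r hr => by
    have := (hylt r hr).2; linarith
  -- split the (j+1)-products
  have hP : (∏ r ∈ Finset.range (j + 1), ∏ s ∈ Finset.Ioc r (j + 1 - 1),
        (y s / (1 - y s) - y r / (1 - y r)))
      = (∏ r ∈ Finset.range j, ∏ s ∈ Finset.Ioc r (j - 1),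
          (y s / (1 - y s) - y r / (1 - y r))) *
        ∏ r ∈ Finset.range j, (y j / (1 - y j) - y r / (1 - y r)) := by
    simp only [Nat.add_sub_cancel]
    rw [Finset.prod_range_succ, Finset.Ioc_self, Finset.prod_empty, mul_one,
      ← Finset.prod_mul_distrib]
    refine Finset.prod_congr rfl fun r hr => ?_
    rw [Finset.mem_range] at hr
    obtain ⟨m, rfl⟩ : ∃ m, j = m + 1 := ⟨j - 1, by omega⟩
    rw [Nat.add_sub_cancel, Finset.prod_Ioc_succ_top (by omega)]
  -- nonvanishing of the denominator pieces
  have tlt : ∀ r s, r < s → s < n + 1 → y r / (1 - y r) < y s / (1 - y s) := by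
    intro r s hrs hs
    have h1 := hylt r (by omega)
    have h2 := hylt s (by omega)
    have h3 : y r < y s := hmono (r + 1) (s + 1) (by omega) (by omega) (by omega)
    rw [div_lt_div_iff₀ (by linarith [h1.2]) (by linarith [h2.2])]
    nlinarith [h1.1, h1.2, h2.1, h2.2]
  have hCne : (∏ c ∈ Finset.range j, (n.choose c : ℝ)) ≠ 0 := by
    rw [Finset.prod_ne_zero_iff]
    intro c hc
    rw [Finset.mem_range] at hc
    exact Nat.cast_ne_zero.mpr (Nat.choose_pos (by omega)).ne'
  have hAne : (∏ r ∈ Finset.range j, (1 - y r) ^ n) ≠ 0 := by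
    rw [Finset.prod_ne_zero_iff]
    intro r hr
    rw [Finset.mem_range] at hr
    exact pow_ne_zero _ (h1r r (by omega))
  have hPne : (∏ r ∈ Finset.range j, ∏ s ∈ Finset.Ioc r (j - 1),
      (y s / (1 - y s) - y r / (1 - y r))) ≠ 0 := by
    rw [Finset.prod_ne_zero_iff]
    intro r hr
    rw [Finset.prod_ne_zero_iff]
    intro s hs
    rw [Finset.mem_range] at hr
    rw [Finset.mem_Ioc] at hs
    exact sub_ne_zero.mpr (ne_of_gt (tlt r s hs.1 (by omega)))
  rw [Finset.prod_range_succ, Finset.prod_range_succ, hP]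
  have cancel : ∀ (C A P cn an G : ℝ), C ≠ 0 → A ≠ 0 → P ≠ 0 →
      C * cn * (A * an) * (P * G) / (C * A * P) = cn * an * G := by
    intro C A P cn an G hC hA hPn
    field_simp
  rw [cancel _ _ _ _ _ _ hCne hAne hPne]
  -- termwise rewrite of the last pivot factors
  have hG : (∏ r ∈ Finset.range j, (y j / (1 - y j) - y r / (1 - y r)))
      = (∏ r ∈ Finset.range j, (y j - y r)) /
        ((1 - y j) ^ j * ∏ r ∈ Finset.range j, (1 - y r)) := by
    have step : ∀ r ∈ Finset.range j,
        y j / (1 - y j) - y r / (1 - y r) = (y j - y r) / ((1 - y j) * (1 - y r)) := by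
      intro r hr
      rw [Finset.mem_range] at hr
      have h2 := h1r r (by omega)
      have h3 := h1r j (by omega)
      field_simp
      ring
    rw [Finset.prod_congr rfl step, Finset.prod_div_distrib, Finset.prod_mul_distrib,
      Finset.prod_const, Finset.card_range]
  rw [hG]
  -- reindex the RHS products
  have hnum : (∏ k ∈ Finset.Ico 1 (j + 1), (x (j + 1) - x k))
      = ∏ r ∈ Finset.range j, (y j - y r) := by
    rw [Finset.prod_Ico_eq_prod_range]
    simp only [Nat.add_sub_cancel]
    exact Finset.prod_congr rfl fun r _ => by rw [hy]; rw [Nat.add_comm 1 r]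
  have hden : (∏ k ∈ Finset.Icc 1 j, (1 - x k)) = ∏ r ∈ Finset.range j, (1 - y r) := by
    rw [← Finset.Ico_add_one_right_eq_Icc, Finset.prod_Ico_eq_prod_range]
    exact Finset.prod_congr rfl fun r _ => by rw [hy]; rw [Nat.add_comm 1 r]
  simp only [Nat.add_sub_cancel, Nat.succ_sub_succ, Nat.sub_zero]
  rw [hnum, hden]
  have hDne : (∏ r ∈ Finset.range j, (1 - y r)) ≠ 0 := by
    rw [Finset.prod_ne_zero_iff]
    intro r hr
    rw [Finset.mem_range] at hr
    exact h1r r (by omega)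
  have hyj : (1 : ℝ) - y j ≠ 0 := h1r j (by omega)
  have hpow : (1 - y j) ^ n = (1 - y j) ^ (n - j) * (1 - y j) ^ j := by
    rw [← pow_add, Nat.sub_add_cancel hjn]
  have hyjx : y j = x (j + 1) := rfl
  rw [← hyjx, hpow]
  field_simp
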